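/- arXiv:1704.00327 — 2 statements merged into one kernel-verified Lean document; each statement's English description precedes it below -/
import Mathlib

section
/- Let k_q > 0 and let q, q_d : [0, ∞) → S² be differentiable curves such that ⟨q_d(t), q(t)⟩ > −1 for all t ≥ 0 and the velocity error satisfies the feedback relation q̇(t) − 𝒯(q(t), q_d(t))·q̇_d(t) = −k_q e_q(q(t), q_d(t)) for all t ≥ 0. Then (d/dt) Ψ(q(t), q_d(t)) = −k_q ‖e_q(q(t), q_d(t))‖₂², and consequently Ψ(q(t), q_d(t)) ≤ Ψ(q(0), q_d(0)) e^{−(k_q/2) t} for all t ≥ 0. -/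
open scoped RealInnerProductSpace

/-- Cross product on ℝ³ (as `EuclideanSpace ℝ (Fin 3)`). -/
noncomputable def cross (a b : EuclideanSpace ℝ (Fin 3)) : EuclideanSpace ℝ (Fin 3) :=
  WithLp.toLp 2 ![a 1 * b 2 - a 2 * b 1, a 2 * b 0 - a 0 * b 2, a 0 * b 1 - a 1 * b 0]

/-- Reduced-attitude error function Ψ(q, q_d) = 2 − √2·√(1 + ⟨q_d, q⟩). -/
noncomputable def Psi (q qd : EuclideanSpace ℝ (Fin 3)) : ℝ :=
  2 - Real.sqrt 2 * Real.sqrt (1 + ⟪qd, q⟫)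

/-- Reduced-attitude error vector e_q(q, q_d). -/
noncomputable def eVec (q qd : EuclideanSpace ℝ (Fin 3)) : EuclideanSpace ℝ (Fin 3) :=
  (1 / (Real.sqrt 2 * Real.sqrt (1 + ⟪qd, q⟫))) • cross q (cross q qd)

/-- Transport map 𝒯(q, q_d)·v = (q_d × v) × q. -/
noncomputable def transport (q qd v : EuclideanSpace ℝ (Fin 3)) : EuclideanSpace ℝ (Fin 3) :=
  cross (cross qd v) q

lemma inner3 (x y : EuclideanSpace ℝ (Fin 3)) :
    ⟪x, y⟫ = x 0 * y 0 + x 1 * y 1 + x 2 * y 2 := by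
  simp [PiLp.inner_apply, Fin.sum_univ_three, RCLike.inner_apply, mul_comm]

lemma crossA (b d a : EuclideanSpace ℝ (Fin 3)) :
    ⟪b, cross (cross b d) a⟫ = ⟪a, b⟫ * ⟪b, d⟫ - ⟪a, d⟫ * ⟪b, b⟫ := by
  simp only [inner3, cross, WithLp.ofLp_toLp, Matrix.cons_val_zero, Matrix.cons_val_one, Matrix.head_cons,
    Matrix.cons_val_two, Matrix.tail_cons]
  ring

lemma crossB (b a : EuclideanSpace ℝ (Fin 3)) :
    ⟪b, cross a (cross a b)⟫ = ⟪a, b⟫ ^ 2 - ⟪a, a⟫ * ⟪b, b⟫ := by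
  simp only [inner3, cross, WithLp.ofLp_toLp, Matrix.cons_val_zero, Matrix.cons_val_one, Matrix.head_cons,
    Matrix.cons_val_two, Matrix.tail_cons]
  ring

lemma crossC (a b : EuclideanSpace ℝ (Fin 3)) :
    ⟪cross a (cross a b), cross a (cross a b)⟫
      = ⟪a, a⟫ * (⟪a, a⟫ * ⟪b, b⟫ - ⟪a, b⟫ ^ 2) := by
  simp only [inner3, cross, WithLp.ofLp_toLp, Matrix.cons_val_zero, Matrix.cons_val_one, Matrix.head_cons,
    Matrix.cons_val_two, Matrix.tail_cons]
  ring

lemma deriv_zero_of_const_Ici {f : ℝ → ℝ} {d t : ℝ} (hd : HasDerivAt f d t)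
    (hc : ∀ s, t ≤ s → f s = f t) : d = 0 := by
  have h2 : HasDerivWithinAt (fun _ => f t) d (Set.Ici t) t :=
    hd.hasDerivWithinAt.congr (fun s hs => (hc s hs).symm) (hc t le_rfl).symm
  have h3 := h2.derivWithin (uniqueDiffOn_Ici t t Set.self_mem_Ici)
  have h4 := (hasDerivWithinAt_const t (Set.Ici t) (f t)).derivWithin
    (uniqueDiffOn_Ici t t Set.self_mem_Ici)
  rw [← h3, h4]

lemma alg_hE (c : ℝ) (hp : 0 < 1 + c) :
    1 / (Real.sqrt 2 * Real.sqrt (1 + c)) * (1 / (Real.sqrt 2 * Real.sqrt (1 + c))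
      * (1 * (1 * 1 - c ^ 2))) = (1 - c) / 2 := by
  have hr : 0 < Real.sqrt (1 + c) := Real.sqrt_pos.mpr hp
  have hr2 : Real.sqrt (1 + c) ^ 2 = 1 + c := Real.sq_sqrt hp.le
  have h22 : Real.sqrt 2 ^ 2 = 2 := Real.sq_sqrt (by norm_num)
  have h1c : (1 + c) ≠ 0 := hp.ne'
  calc 1 / (Real.sqrt 2 * Real.sqrt (1 + c)) * (1 / (Real.sqrt 2 * Real.sqrt (1 + c))
      * (1 * (1 * 1 - c ^ 2)))
      = (1 - c ^ 2) / (Real.sqrt 2 ^ 2 * Real.sqrt (1 + c) ^ 2) := by ring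
    _ = (1 - c ^ 2) / (2 * (1 + c)) := by rw [h22, hr2]
    _ = (1 - c) / 2 := by field_simp; ring

lemma alg1 (kq c : ℝ) (hp : 0 < 1 + c) :
    -(kq * ((1 - c) / 2)) = -(Real.sqrt 2 * (1 / (2 * Real.sqrt (1 + c))
      * (kq * (1 - c ^ 2) / (Real.sqrt 2 * Real.sqrt (1 + c))))) := by
  have hr : 0 < Real.sqrt (1 + c) := Real.sqrt_pos.mpr hp
  have hr2 : Real.sqrt (1 + c) ^ 2 = 1 + c := Real.sq_sqrt hp.le
  have h2 : (0:ℝ) < Real.sqrt 2 := Real.sqrt_pos.mpr (by norm_num)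
  have h1c : (1 + c) ≠ 0 := hp.ne'
  have key : Real.sqrt 2 * (1 / (2 * Real.sqrt (1 + c))
      * (kq * (1 - c ^ 2) / (Real.sqrt 2 * Real.sqrt (1 + c))))
      = kq * (1 - c ^ 2) / (2 * Real.sqrt (1 + c) ^ 2) := by
    rw [eq_div_iff (by positivity)]
    field_simp
  rw [key, hr2]
  field_simp
  ring

/-- Under the feedback law e_{q̇} = −k_q e_q, the error function satisfies
Ψ̇ = −k_q‖e_q‖² and hence decays exponentially: Ψ(t) ≤ Ψ(0)·e^{−(k_q/2)t}. -/
theorem psi_exponential_decay (kq : ℝ) (hkq : 0 < kq)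
    (q qd q' qd' : ℝ → EuclideanSpace ℝ (Fin 3))
    (hq : ∀ t, 0 ≤ t → ‖q t‖ = 1) (hqd : ∀ t, 0 ≤ t → ‖qd t‖ = 1)
    (hq' : ∀ t, 0 ≤ t → HasDerivAt q (q' t) t)
    (hqd' : ∀ t, 0 ≤ t → HasDerivAt qd (qd' t) t)
    (hang : ∀ t, 0 ≤ t → ⟪qd t, q t⟫ > -1)
    (hfb : ∀ t, 0 ≤ t →
      q' t - transport (q t) (qd t) (qd' t) = -(kq • eVec (q t) (qd t))) :
    (∀ t, 0 ≤ t → HasDerivAt (fun s => Psi (q s) (qd s))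
        (-(kq * ‖eVec (q t) (qd t)‖ ^ 2)) t) ∧
    (∀ t, 0 ≤ t → Psi (q t) (qd t) ≤ Psi (q 0) (qd 0) * Real.exp (-(kq / 2) * t)) := by
  have hqq : ∀ t, 0 ≤ t → ⟪q t, q t⟫ = 1 := by
    intro t ht; rw [real_inner_self_eq_norm_sq, hq t ht]; norm_num
  have hqdqd : ∀ t, 0 ≤ t → ⟪qd t, qd t⟫ = 1 := by
    intro t ht; rw [real_inner_self_eq_norm_sq, hqd t ht]; norm_num
  have hpos : ∀ t, 0 ≤ t → (0:ℝ) < 1 + ⟪qd t, q t⟫ := by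
    intro t ht; have := hang t ht; linarith
  have hcle : ∀ t, 0 ≤ t → ⟪qd t, q t⟫ ≤ 1 := by
    intro t ht
    have := real_inner_le_norm (qd t) (q t)
    rw [hq t ht, hqd t ht] at this; linarith
  have horthqd : ∀ t, 0 ≤ t → ⟪qd t, qd' t⟫ = 0 := by
    intro t ht
    have hd : HasDerivAt (fun s => ⟪qd s, qd s⟫)
        (⟪qd t, qd' t⟫ + ⟪qd' t, qd t⟫) t := (hqd' t ht).inner ℝ (hqd' t ht)
    have hz := deriv_zero_of_const_Ici hd (fun s hs => by
      show ⟪qd s, qd s⟫ = ⟪qd t, qd t⟫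
      rw [hqdqd s (ht.trans hs), hqdqd t ht])
    have hcomm : ⟪qd' t, qd t⟫ = ⟪qd t, qd' t⟫ := real_inner_comm _ _
    linarith [hz, hcomm]
  -- the norm of the error vector
  have hE : ∀ t, 0 ≤ t → ‖eVec (q t) (qd t)‖ ^ 2 = (1 - ⟪qd t, q t⟫) / 2 := by
    intro t ht
    rw [← real_inner_self_eq_norm_sq]
    rw [eVec, real_inner_smul_left, real_inner_smul_right, crossC, hqq t ht, hqdqd t ht,
      real_inner_comm (qd t) (q t)]
    exact alg_hE _ (hpos t ht)
  have hderiv : ∀ t, 0 ≤ t → HasDerivAt (fun s => Psi (q s) (qd s))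
      (-(kq * ‖eVec (q t) (qd t)‖ ^ 2)) t := by
    intro t ht
    have hp := hpos t ht
    -- inner product of qd with the feedback equation
    have h0 : ⟪qd t, q' t - transport (q t) (qd t) (qd' t)⟫
        = ⟪qd t, -(kq • eVec (q t) (qd t))⟫ := by rw [hfb t ht]
    rw [inner_sub_right, inner_neg_right, real_inner_smul_right] at h0
    have hT : ⟪qd t, transport (q t) (qd t) (qd' t)⟫ = -⟪q t, qd' t⟫ := by
      rw [transport, crossA, horthqd t ht, hqdqd t ht]; ring
    have hEin : ⟪qd t, eVec (q t) (qd t)⟫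
        = 1 / (Real.sqrt 2 * Real.sqrt (1 + ⟪qd t, q t⟫))
            * (⟪qd t, q t⟫ ^ 2 - 1) := by
      rw [eVec, real_inner_smul_right, crossB, hqq t ht, hqdqd t ht,
        real_inner_comm (qd t) (q t)]
      ring
    -- value of the derivative of the inner product
    have hc'val : ⟪qd t, q' t⟫ + ⟪qd' t, q t⟫
        = kq * (1 - ⟪qd t, q t⟫ ^ 2) / (Real.sqrt 2 * Real.sqrt (1 + ⟪qd t, q t⟫)) := by
      rw [hT, hEin] at h0
      have hcomm2 : ⟪qd' t, q t⟫ = ⟪q t, qd' t⟫ := real_inner_comm _ _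
      rw [hcomm2]
      have : ⟪qd t, q' t⟫ = -⟪q t, qd' t⟫
          - kq * (1 / (Real.sqrt 2 * Real.sqrt (1 + ⟪qd t, q t⟫))
            * (⟪qd t, q t⟫ ^ 2 - 1)) := by linarith
      rw [this]; ring
    -- derivative of the composite
    have hc' : HasDerivAt (fun s => ⟪qd s, q s⟫)
        (⟪qd t, q' t⟫ + ⟪qd' t, q t⟫) t := (hqd' t ht).inner ℝ (hq' t ht)
    have h1 : HasDerivAt (fun s => 1 + ⟪qd s, q s⟫)
        (⟪qd t, q' t⟫ + ⟪qd' t, q t⟫) t := hc'.const_add 1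
    have hsqrt := (Real.hasDerivAt_sqrt (ne_of_gt hp)).comp t h1
    have h3 := (hsqrt.const_mul (Real.sqrt 2)).const_sub 2
    have hval : -(kq * ‖eVec (q t) (qd t)‖ ^ 2)
        = -(Real.sqrt 2 * (1 / (2 * Real.sqrt (1 + ⟪qd t, q t⟫))
            * (⟪qd t, q' t⟫ + ⟪qd' t, q t⟫))) := by
      rw [hE t ht, hc'val]
      exact alg1 kq _ hp
    simp only [Psi]
    rw [hval]
    exact h3
  refine ⟨hderiv, ?_⟩
  intro T hT
  set g : ℝ → ℝ := fun s => Psi (q s) (qd s) * Real.exp (kq / 2 * s) with hg_def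
  have hg : ∀ s, 0 ≤ s → HasDerivAt g
      ((-(kq * ‖eVec (q s) (qd s)‖ ^ 2)) * Real.exp (kq / 2 * s)
        + Psi (q s) (qd s) * (Real.exp (kq / 2 * s) * (kq / 2))) s := by
    intro s hs
    have hline : HasDerivAt (fun x : ℝ => kq / 2 * x) (kq / 2) s := by
      simpa using (hasDerivAt_id s).const_mul (kq / 2)
    exact (hderiv s hs).mul hline.exp
  have hgle : ∀ s, 0 ≤ s → (-(kq * ‖eVec (q s) (qd s)‖ ^ 2)) * Real.exp (kq / 2 * s)
        + Psi (q s) (qd s) * (Real.exp (kq / 2 * s) * (kq / 2)) ≤ 0 := by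
    intro s hs
    have hp := hpos s hs
    have hr2 : Real.sqrt (1 + ⟪qd s, q s⟫) ^ 2 = 1 + ⟪qd s, q s⟫ := Real.sq_sqrt hp.le
    have hrle : Real.sqrt (1 + ⟪qd s, q s⟫) ≤ Real.sqrt 2 :=
      Real.sqrt_le_sqrt (by linarith [hcle s hs])
    have hrn : (0:ℝ) ≤ Real.sqrt (1 + ⟪qd s, q s⟫) := Real.sqrt_nonneg _
    have hkey : Psi (q s) (qd s) ≤ 2 * ‖eVec (q s) (qd s)‖ ^ 2 := by
      rw [hE s hs, Psi]
      nlinarith [hr2, hrn, mul_nonneg hrn (sub_nonneg.mpr hrle)]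
    have hexp : (0:ℝ) < Real.exp (kq / 2 * s) := Real.exp_pos _
    have h5 : Psi (q s) (qd s) * (Real.exp (kq / 2 * s) * (kq / 2))
        ≤ 2 * ‖eVec (q s) (qd s)‖ ^ 2 * (Real.exp (kq / 2 * s) * (kq / 2)) :=
      mul_le_mul_of_nonneg_right hkey (by positivity)
    nlinarith [h5]
  have hcont : ContinuousOn g (Set.Icc 0 T) := fun s hs =>
    ((hg s hs.1).continuousAt).continuousWithinAt
  have hdiff : DifferentiableOn ℝ g (interior (Set.Icc 0 T)) := by
    rw [interior_Icc]
    exact fun s hs => (hg s hs.1.le).differentiableAt.differentiableWithinAt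
  have hanti : AntitoneOn g (Set.Icc 0 T) := by
    apply antitoneOn_of_deriv_nonpos (convex_Icc 0 T) hcont hdiff
    intro s hs
    rw [interior_Icc] at hs
    rw [(hg s hs.1.le).deriv]
    exact hgle s hs.1.le
  have hgT : g T ≤ g 0 := hanti ⟨le_rfl, hT⟩ ⟨hT, le_rfl⟩ hT
  have hg0 : g 0 = Psi (q 0) (qd 0) := by simp [hg_def]
  have hexp1 : Real.exp (kq / 2 * T) * Real.exp (-(kq / 2) * T) = 1 := by
    rw [← Real.exp_add]; ring_nf; exact Real.exp_zero
  have hexpn : (0:ℝ) ≤ Real.exp (-(kq / 2) * T) := (Real.exp_pos _).le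
  calc Psi (q T) (qd T)
      = g T * Real.exp (-(kq / 2) * T) := by
        rw [hg_def]; simp only []; rw [mul_assoc, hexp1, mul_one]
    _ ≤ g 0 * Real.exp (-(kq / 2) * T) := mul_le_mul_of_nonneg_right hgT hexpn
    _ = Psi (q 0) (qd 0) * Real.exp (-(kq / 2) * T) := by rw [hg0]
end

section
/- For all q, q_d ∈ S² with ⟨q_d, q⟩ > −1, one has ‖⟨q_d, q⟩·q − q_d‖₂ ≤ 2‖e_q(q, q_d)‖₂. -/
open scoped RealInnerProductSpace

lemma inner_eq (a b : EuclideanSpace ℝ (Fin 3)) :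
    ⟪a, b⟫ = a 0 * b 0 + a 1 * b 1 + a 2 * b 2 := by
  simp [EuclideanSpace.inner_eq_star_dotProduct, dotProduct, Fin.sum_univ_three]; ring

lemma norm_sq_eq (a : EuclideanSpace ℝ (Fin 3)) (h : ‖a‖ = 1) :
    a 0 ^ 2 + a 1 ^ 2 + a 2 ^ 2 = 1 := by
  have h2 : ⟪a, a⟫ = 1 := by
    rw [real_inner_self_eq_norm_sq, h]; norm_num
  rw [inner_eq] at h2
  nlinarith [h2]

lemma triple_cross (q qd : EuclideanSpace ℝ (Fin 3)) (hq : ‖q‖ = 1) :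
    cross q (cross q qd) = ⟪qd, q⟫ • q - qd := by
  have hn := norm_sq_eq q hq
  ext i
  have hs : ∀ j, (⟪qd, q⟫ • q - qd) j = ⟪qd, q⟫ * q j - qd j := by
    intro j; simp [inner_eq]
  fin_cases i
  · simp [cross, hs, inner_eq, Fin.sum_univ_three]; linear_combination (-(qd 0)) * hn
  · simp [cross, hs, inner_eq, Fin.sum_univ_three]; linear_combination (-(qd 1)) * hn
  · simp [cross, hs, inner_eq, Fin.sum_univ_three]; linear_combination (-(qd 2)) * hn

/-- ‖⟨q_d,q⟩q − q_d‖ ≤ 2‖e_q(q, q_d)‖ whenever ⟨q_d, q⟩ > −1. -/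
theorem norm_proj_le_two_eVec (q qd : EuclideanSpace ℝ (Fin 3))
    (hq : ‖q‖ = 1) (hqd : ‖qd‖ = 1) (h : ⟪qd, q⟫ > -1) :
    ‖⟪qd, q⟫ • q - qd‖ ≤ 2 * ‖eVec q qd‖ := by
  have hc1 : ⟪qd, q⟫ ≤ 1 := by
    have := real_inner_le_norm qd q
    rw [hq, hqd] at this; simpa using this
  have hpos : (0:ℝ) < 1 + ⟪qd, q⟫ := by linarith
  have h2 : (0:ℝ) < Real.sqrt 2 := by positivity
  have hsq : Real.sqrt (1 + ⟪qd, q⟫) ≤ Real.sqrt 2 := by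
    apply Real.sqrt_le_sqrt; linarith
  have hden : (0:ℝ) < Real.sqrt 2 * Real.sqrt (1 + ⟪qd, q⟫) := by
    exact mul_pos h2 (Real.sqrt_pos.mpr hpos)
  have hdle : Real.sqrt 2 * Real.sqrt (1 + ⟪qd, q⟫) ≤ 2 := by
    have : Real.sqrt 2 * Real.sqrt 2 = 2 := Real.mul_self_sqrt (by norm_num)
    nlinarith
  rw [eVec, triple_cross q qd hq, norm_smul]
  have hfac : (1:ℝ)/2 ≤ ‖1 / (Real.sqrt 2 * Real.sqrt (1 + ⟪qd, q⟫))‖ := by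
    rw [Real.norm_eq_abs, abs_of_pos (by positivity)]
    rw [le_div_iff₀ hden]; linarith
  nlinarith [norm_nonneg (⟪qd, q⟫ • q - qd), hfac]
end
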